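/- arXiv:2207.00970 — 3 statements merged into one kernel-verified Lean document; each statement's English description precedes it below -/
import Mathlib

section
/- Let M be a real 3×3 matrix, let F: ℝ³ → ℝ³ be continuous, and let x: ℝ → ℝ³ be twice continuously differentiable with ẍ(t) = M ẋ(t) + F(x(t)) for all t. Then for every t₀ ∈ ℝ and every h ≥ 0 one has the variation-of-constants formulas x(t₀+h) = x(t₀) + h φ₁(hM) ẋ(t₀) + h² ∫₀¹ (1−τ) φ₁((1−τ)hM) F(x(t₀+hτ)) dτ and ẋ(t₀+h) = φ₀(hM) ẋ(t₀) + h ∫₀¹ φ₀((1−τ)hM) F(x(t₀+hτ)) dτ. -/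
open MeasureTheory intervalIntegral

noncomputable section

attribute [local instance] Matrix.linftyOpNormedAddCommGroup Matrix.linftyOpNormedRing
  Matrix.linftyOpNormedAlgebra

abbrev E3 := EuclideanSpace ℝ (Fin 3)

/-- Action of a real 3×3 matrix on `ℝ³`. -/
def mvec (A : Matrix (Fin 3) (Fin 3) ℝ) (v : E3) : E3 := Matrix.toEuclideanLin A v

/-- The matrix φ-functions: `φ₀(Z) = e^Z`, and
`φ_k(Z) = ∫₀¹ e^{(1-σ)Z} σ^{k-1}/(k-1)! dσ` for `k ≥ 1`. -/
def phi (k : ℕ) (Z : Matrix (Fin 3) (Fin 3) ℝ) : Matrix (Fin 3) (Fin 3) ℝ :=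
  if k = 0 then NormedSpace.exp Z
  else ∫ σ in (0:ℝ)..1, (σ ^ (k - 1) / (Nat.factorial (k - 1))) • NormedSpace.exp ((1 - σ) • Z)

/-! ### Auxiliary definitions and lemmas -/

/-- `mvec` as a continuous linear map in both arguments. -/
def cmat : Matrix (Fin 3) (Fin 3) ℝ →L[ℝ] E3 →L[ℝ] E3 :=
  LinearMap.toContinuousLinearMap <|
    (LinearMap.toContinuousLinearMap.toLinearMap.comp
      (Matrix.toEuclideanLin (𝕜 := ℝ) (m := Fin 3) (n := Fin 3)).toLinearMap)

lemma cmat_apply (A : Matrix (Fin 3) (Fin 3) ℝ) (v : E3) : cmat A v = mvec A v := rfl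

lemma cmat_mul (A B : Matrix (Fin 3) (Fin 3) ℝ) (v : E3) :
    cmat (A * B) v = cmat A (cmat B v) := by
  show mvec (A * B) v = mvec A (mvec B v)
  simp [mvec, Matrix.toEuclideanLin_apply, Matrix.mulVec_mulVec]

lemma cmat_one (v : E3) : cmat 1 v = v := by
  show mvec 1 v = v
  simp [mvec, Matrix.toEuclideanLin_apply]

/-- The semigroup `e^{sM}` acting on `ℝ³`, as an operator-valued function. -/
def P (M : Matrix (Fin 3) (Fin 3) ℝ) (s : ℝ) : E3 →L[ℝ] E3 :=
  cmat (NormedSpace.exp (s • M))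

lemma smulM_cont (M : Matrix (Fin 3) (Fin 3) ℝ) {g : ℝ → ℝ} (hg : Continuous g) :
    Continuous fun s : ℝ => cmat (NormedSpace.exp (g s • M)) :=
  cmat.continuous.comp (NormedSpace.exp_continuous.comp
    (((ContinuousLinearMap.id ℝ ℝ).smulRight M).continuous.comp hg))

lemma P_cont (M : Matrix (Fin 3) (Fin 3) ℝ) : Continuous (P M) :=
  smulM_cont M continuous_id

lemma P_zero_apply (M : Matrix (Fin 3) (Fin 3) ℝ) (z : E3) : P M 0 z = z := by
  rw [P, zero_smul, NormedSpace.exp_zero, cmat_one]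

lemma P_add_apply (M : Matrix (Fin 3) (Fin 3) ℝ) (a b : ℝ) (z : E3) :
    P M (a + b) z = P M a (P M b z) := by
  rw [P, add_smul,
    Matrix.exp_add_of_commute _ _ (((Commute.refl M).smul_left a).smul_right b), cmat_mul]
  rfl

lemma P_deriv (M : Matrix (Fin 3) (Fin 3) ℝ) (s : ℝ) :
    HasDerivAt (P M) (cmat (NormedSpace.exp (s • M) * M)) s :=
  cmat.hasFDerivAt.comp_hasDerivAt s (hasDerivAt_exp_smul_const M s)

lemma P_deriv' (M : Matrix (Fin 3) (Fin 3) ℝ) (s : ℝ) :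
    HasDerivAt (P M) (cmat (M * NormedSpace.exp (s • M))) s :=
  cmat.hasFDerivAt.comp_hasDerivAt s (hasDerivAt_exp_smul_const' M s)

/-- `Ψ(r) = ∫₀ʳ e^{uM} du` as an operator. -/
def Psi (M : Matrix (Fin 3) (Fin 3) ℝ) (r : ℝ) : E3 →L[ℝ] E3 :=
  ∫ u in (0:ℝ)..r, P M u

lemma Psi_deriv (M : Matrix (Fin 3) (Fin 3) ℝ) (r : ℝ) : HasDerivAt (Psi M) (P M r) r :=
  integral_hasDerivAt_right ((P_cont M).intervalIntegrable _ _)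
    ((P_cont M).stronglyMeasurableAtFilter _ _) (P_cont M).continuousAt

lemma Psi_cont (M : Matrix (Fin 3) (Fin 3) ℝ) : Continuous (Psi M) :=
  continuous_iff_continuousAt.mpr fun r => (Psi_deriv M r).continuousAt

lemma Psi_apply (M : Matrix (Fin 3) (Fin 3) ℝ) (r : ℝ) (z : E3) :
    Psi M r z = ∫ u in (0:ℝ)..r, P M u z :=
  (ContinuousLinearMap.intervalIntegral_comp_comm (ContinuousLinearMap.apply ℝ E3 z)
    ((P_cont M).intervalIntegrable 0 r)).symm

lemma P_apply_deriv (M : Matrix (Fin 3) (Fin 3) ℝ) (z : E3) (u : ℝ) :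
    HasDerivAt (fun u => P M u z) (cmat (NormedSpace.exp (u • M) * M) z) u :=
  (ContinuousLinearMap.apply ℝ E3 z).hasFDerivAt.comp_hasDerivAt u (P_deriv M u)

lemma Psi_mulM (M : Matrix (Fin 3) (Fin 3) ℝ) (r : ℝ) (z : E3) :
    Psi M r (cmat M z) = P M r z - z := by
  have hint : IntervalIntegrable (fun u => cmat (NormedSpace.exp (u • M) * M) z)
      volume 0 r := by
    apply Continuous.intervalIntegrable
    exact (ContinuousLinearMap.apply ℝ E3 z).continuous.comp
      (cmat.continuous.comp ((NormedSpace.exp_continuous.comp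
        (((ContinuousLinearMap.id ℝ ℝ).smulRight M).continuous)).mul continuous_const))
  have h1 : Psi M r (cmat M z) = ∫ u in (0:ℝ)..r, cmat (NormedSpace.exp (u • M) * M) z := by
    rw [Psi_apply]
    refine integral_congr fun u _ => ?_
    rw [P, ← cmat_mul]
  rw [h1, integral_eq_sub_of_hasDerivAt (fun u _ => P_apply_deriv M z u) hint, P_zero_apply]

lemma Psi_zero_apply (M : Matrix (Fin 3) (Fin 3) ℝ) (z : E3) : Psi M 0 z = 0 := by
  rw [Psi, integral_same]
  rfl

lemma phi0_eq (Z : Matrix (Fin 3) (Fin 3) ℝ) : phi 0 Z = NormedSpace.exp Z := by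
  simp [phi]

lemma phi1_eq (Z : Matrix (Fin 3) (Fin 3) ℝ) :
    phi 1 Z = ∫ σ in (0:ℝ)..1, NormedSpace.exp ((1 - σ) • Z) := by
  simp [phi]

lemma intInt_exp (M : Matrix (Fin 3) (Fin 3) ℝ) {g : ℝ → ℝ} (hg : Continuous g) (a b : ℝ) :
    @IntervalIntegrable _ PseudoMetricSpace.toUniformSpace.toTopologicalSpace _
      (fun σ => NormedSpace.exp (g σ • M)) volume a b := by
  apply Continuous.intervalIntegrable
  exact NormedSpace.exp_continuous.comp
    (((ContinuousLinearMap.id ℝ ℝ).smulRight M).continuous.comp hg)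

/-- Key identity: `r • φ₁(rM) z = Ψ(r) z`. -/
lemma key1 (M : Matrix (Fin 3) (Fin 3) ℝ) (r : ℝ) (z : E3) :
    r • mvec (phi 1 (r • M)) z = Psi M r z := by
  have hgc : Continuous fun σ : ℝ => (1 - σ) * r :=
    (continuous_const.sub continuous_id).mul continuous_const
  have h1 : phi 1 (r • M) = ∫ σ in (0:ℝ)..1, NormedSpace.exp (((1 - σ) * r) • M) := by
    rw [phi1_eq]
    refine integral_congr fun σ _ => ?_
    rw [smul_smul]
  have h2 : mvec (phi 1 (r • M)) z = ∫ σ in (0:ℝ)..1, P M ((1 - σ) * r) z := by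
    rw [← cmat_apply, h1]
    exact (ContinuousLinearMap.intervalIntegral_comp_comm
      ((ContinuousLinearMap.apply ℝ E3 z).comp cmat) (intInt_exp M hgc 0 1)).symm
  have h3 : (∫ σ in (0:ℝ)..1, P M ((1 - σ) * r) z)
      = ∫ σ in (0:ℝ)..1, (fun s => P M (r - s) z) (r * σ) := by
    refine integral_congr fun σ _ => ?_
    simp only
    rw [show (1 - σ) * r = r - r * σ by ring]
  rw [h2, h3, smul_integral_comp_mul_left (fun s => P M (r - s) z) r, mul_zero, mul_one,
    integral_comp_sub_left (fun u => P M u z) r, sub_self, sub_zero, Psi_apply]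

set_option maxHeartbeats 1000000 in
/-- variation-of-constants formula. -/
theorem stmt0 (M : Matrix (Fin 3) (Fin 3) ℝ) (F : E3 → E3) (hF : Continuous F)
    (x : ℝ → E3) (hx : ContDiff ℝ 2 x)
    (hODE : ∀ t : ℝ, deriv (deriv x) t = mvec M (deriv x t) + F (x t))
    (t₀ h : ℝ) (hh : 0 ≤ h) :
    x (t₀ + h) = x t₀ + h • mvec (phi 1 (h • M)) (deriv x t₀)
        + h ^ 2 • ∫ τ in (0:ℝ)..1,
            (1 - τ) • mvec (phi 1 (((1 - τ) * h) • M)) (F (x (t₀ + h * τ)))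
      ∧
    deriv x (t₀ + h) = mvec (phi 0 (h • M)) (deriv x t₀)
        + h • ∫ τ in (0:ℝ)..1, mvec (phi 0 (((1 - τ) * h) • M)) (F (x (t₀ + h * τ))) := by
  have hx' : ContDiff ℝ (1 + 1) x := by
    rwa [show ((1 : WithTop ℕ∞) + 1) = 2 by norm_num]
  obtain ⟨hxdiff, -, hv1⟩ := contDiff_succ_iff_deriv.mp hx'
  set v := deriv x with hv
  have hvdiff : Differentiable ℝ v := hv1.differentiable one_ne_zero
  have hvcont : Continuous v := hv1.continuous
  have hxcont : Continuous x := hxdiff.continuous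
  set w : ℝ → E3 := fun s => F (x (t₀ + s)) with hw
  have hwcont : Continuous w := hF.comp (hxcont.comp (continuous_const.add continuous_id))
  have hshift : ∀ s : ℝ, HasDerivAt (fun s : ℝ => t₀ + s) 1 s :=
    fun s => (hasDerivAt_id s).const_add t₀
  -- derivative of shifted velocity
  have hVd : ∀ s : ℝ, HasDerivAt (fun s => v (t₀ + s)) (cmat M (v (t₀ + s)) + w s) s := by
    intro s
    have h2 := HasDerivAt.comp_const_add t₀ s ((hvdiff (t₀ + s)).hasDerivAt)
    have h3 : deriv v (t₀ + s) = cmat M (v (t₀ + s)) + w s := by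
      rw [cmat_apply, hw]
      exact hODE (t₀ + s)
    rw [h3] at h2
    exact h2
  have hXd : ∀ s : ℝ, HasDerivAt (fun s => x (t₀ + s)) (v (t₀ + s)) s := by
    intro s
    exact HasDerivAt.comp_const_add t₀ s ((hxdiff (t₀ + s)).hasDerivAt)
  have contOpApply : ∀ {T : ℝ → E3 →L[ℝ] E3} {g : ℝ → E3},
      Continuous T → Continuous g → Continuous fun s => T s (g s) :=
    fun hT hg => hT.clm_apply hg
  -- variation of constants for the velocity
  have hgd : ∀ s : ℝ, HasDerivAt (fun s => P M (-s) (v (t₀ + s))) (P M (-s) (w s)) s := by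
    intro s
    have hc : HasDerivAt (fun s : ℝ => P M (-s))
        ((-1 : ℝ) • cmat (NormedSpace.exp ((-s) • M) * M)) s :=
      HasDerivAt.scomp_of_eq s (P_deriv M (-s)) (hasDerivAt_neg s) rfl
    have h4 := hc.clm_apply (hVd s)
    convert h4 using 1
    case e'_4 => rfl
    case e'_5 => rfl
    case e'_6 => rfl
    rw [ContinuousLinearMap.smul_apply, cmat_mul, map_add, neg_one_smul]
    show P M (-s) (w s)
      = -(P M (-s) (cmat M (v (t₀ + s)))) + (P M (-s) (cmat M (v (t₀ + s))) + P M (-s) (w s))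
    abel
  have hintg : ∀ a b : ℝ, IntervalIntegrable (fun u => P M (-u) (w u)) volume a b := by
    intro a b
    apply Continuous.intervalIntegrable
    exact contOpApply ((P_cont M).comp continuous_neg) hwcont
  have hC2 : ∀ s : ℝ, v (t₀ + s) = P M s (v t₀) + ∫ u in (0:ℝ)..s, P M (s - u) (w u) := by
    intro s
    have h0 := integral_eq_sub_of_hasDerivAt (fun u _ => hgd u) (hintg 0 s)
    have h0' : P M (-s) (v (t₀ + s)) = v t₀ + ∫ u in (0:ℝ)..s, P M (-u) (w u) := by
      rw [h0]
      have : P M (-0) (v (t₀ + 0)) = v t₀ := by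
        rw [neg_zero, add_zero, P_zero_apply]
      rw [this]
      abel
    have e1 : ∀ z : E3, P M s (P M (-s) z) = z := by
      intro z
      rw [← P_add_apply, add_neg_cancel, P_zero_apply]
    calc v (t₀ + s) = P M s (P M (-s) (v (t₀ + s))) := (e1 _).symm
      _ = P M s (v t₀) + P M s (∫ u in (0:ℝ)..s, P M (-u) (w u)) := by rw [h0', map_add]
      _ = P M s (v t₀) + ∫ u in (0:ℝ)..s, P M (s - u) (w u) := by
          congr 1
          rw [← ContinuousLinearMap.intervalIntegral_comp_comm (P M s) (hintg 0 s)]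
          refine integral_congr fun u _ => ?_
          rw [← P_add_apply, ← sub_eq_add_neg]
  -- second statement
  have goal2 : deriv x (t₀ + h) = mvec (phi 0 (h • M)) (v t₀)
      + h • ∫ τ in (0:ℝ)..1, mvec (phi 0 (((1 - τ) * h) • M)) (F (x (t₀ + h * τ))) := by
    have e : (∫ τ in (0:ℝ)..1, mvec (phi 0 (((1 - τ) * h) • M)) (F (x (t₀ + h * τ))))
        = ∫ τ in (0:ℝ)..1, (fun s => P M (h - s) (w s)) (h * τ) := by
      refine integral_congr fun τ _ => ?_
      simp only
      rw [phi0_eq, ← cmat_apply, hw]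
      show cmat (NormedSpace.exp (((1 - τ) * h) • M)) (F (x (t₀ + h * τ)))
        = cmat (NormedSpace.exp ((h - h * τ) • M)) (F (x (t₀ + h * τ)))
      rw [show (1 - τ) * h = h - h * τ by ring]
    rw [e, smul_integral_comp_mul_left (fun s => P M (h - s) (w s)) h, mul_zero, mul_one,
      phi0_eq, ← cmat_apply]
    exact hC2 h
  -- the auxiliary function y
  set y : ℝ → E3 := fun s => v (t₀ + s) - P M s (v t₀) with hy
  have hy0 : y 0 = 0 := by
    rw [hy]
    simp only [add_zero, P_zero_apply, sub_self]
  have hycont : Continuous y :=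
    (hvcont.comp (continuous_const.add continuous_id)).sub
      (contOpApply (P_cont M) continuous_const)
  have hyd : ∀ s : ℝ, HasDerivAt y (cmat M (y s) + w s) s := by
    intro s
    have h2 : HasDerivAt (fun s => P M s (v t₀))
        (cmat (M * NormedSpace.exp (s • M)) (v t₀)) s :=
      (ContinuousLinearMap.apply ℝ E3 (v t₀)).hasFDerivAt.comp_hasDerivAt s (P_deriv' M s)
    have h3 := (hVd s).sub h2
    convert h3 using 1
    case e'_4 => rfl
    case e'_5 => rfl
    case e'_6 => rfl
    case e'_8 => rfl
    rw [hy, cmat_mul]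
    show cmat M (v (t₀ + s) - P M s (v t₀)) + w s
      = cmat M (v (t₀ + s)) + w s - cmat M (P M s (v t₀))
    rw [map_sub]
    abel
  -- displacement
  have hXint : x (t₀ + h) = x t₀ + ∫ s in (0:ℝ)..h, v (t₀ + s) := by
    have h0 := integral_eq_sub_of_hasDerivAt (fun s (_ : s ∈ Set.uIcc 0 h) => hXd s)
      ((hvcont.comp (continuous_const.add continuous_id)).intervalIntegrable 0 h)
    rw [add_zero] at h0
    rw [h0]
    abel
  have hint1 : IntervalIntegrable (fun s => P M s (v t₀)) volume 0 h :=
    (contOpApply (P_cont M) continuous_const).intervalIntegrable 0 h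
  have hint2 : IntervalIntegrable y volume 0 h := hycont.intervalIntegrable 0 h
  have hsplit : (∫ s in (0:ℝ)..h, v (t₀ + s))
      = (∫ s in (0:ℝ)..h, P M s (v t₀)) + ∫ s in (0:ℝ)..h, y s := by
    rw [← integral_add hint1 hint2]
    refine integral_congr fun s _ => ?_
    rw [hy]
    simp only
    abel
  -- the double-integral trick
  have hg2d : ∀ s : ℝ, HasDerivAt (fun s => (∫ u in (0:ℝ)..s, y u) + Psi M (h - s) (y s))
      (Psi M (h - s) (w s)) s := by
    intro s
    have hI : HasDerivAt (fun s => ∫ u in (0:ℝ)..s, y u) (y s) s :=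
      integral_hasDerivAt_right (hycont.intervalIntegrable _ _)
        (hycont.stronglyMeasurableAtFilter _ _) hycont.continuousAt
    have hc : HasDerivAt (fun s : ℝ => Psi M (h - s)) (-P M (h - s)) s :=
      HasDerivAt.comp_const_sub h s (Psi_deriv M (h - s))
    have h4 := hI.add (hc.clm_apply (hyd s))
    convert h4 using 1
    case e'_4 => rfl
    case e'_5 => rfl
    case e'_6 => rfl
    case e'_8 => rfl
    rw [ContinuousLinearMap.neg_apply, map_add, Psi_mulM]
    show Psi M (h - s) (w s)
      = y s + (-(P M (h - s) (y s)) + (P M (h - s) (y s) - y s + Psi M (h - s) (w s)))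
    abel
  have hint3 : IntervalIntegrable (fun s => Psi M (h - s) (w s)) volume 0 h := by
    apply Continuous.intervalIntegrable
    exact contOpApply ((Psi_cont M).comp (continuous_const.sub continuous_id)) hwcont
  have hg2 : (∫ s in (0:ℝ)..h, Psi M (h - s) (w s)) = ∫ s in (0:ℝ)..h, y s := by
    rw [integral_eq_sub_of_hasDerivAt (fun s _ => hg2d s) hint3]
    rw [sub_self, Psi_zero_apply, hy0, map_zero, integral_same]
    abel
  have hfinal1 : x (t₀ + h) = x t₀ + Psi M h (v t₀) + ∫ s in (0:ℝ)..h, Psi M (h - s) (w s) := by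
    rw [hg2, hXint, hsplit, Psi_apply]
    abel
  have e1 : (∫ τ in (0:ℝ)..1, h • ((1 - τ) • mvec (phi 1 (((1 - τ) * h) • M))
        (F (x (t₀ + h * τ)))))
      = ∫ τ in (0:ℝ)..1, (fun s => Psi M (h - s) (w s)) (h * τ) := by
    refine integral_congr fun τ _ => ?_
    simp only
    rw [smul_smul, mul_comm h (1 - τ), key1 M ((1 - τ) * h) (F (x (t₀ + h * τ))), hw]
    show Psi M ((1 - τ) * h) (F (x (t₀ + h * τ))) = Psi M (h - h * τ) (F (x (t₀ + h * τ)))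
    rw [show (1 - τ) * h = h - h * τ by ring]
  constructor
  · have e2 : h ^ 2 • (∫ τ in (0:ℝ)..1,
        (1 - τ) • mvec (phi 1 (((1 - τ) * h) • M)) (F (x (t₀ + h * τ))))
        = ∫ s in (0:ℝ)..h, Psi M (h - s) (w s) := by
      calc h ^ 2 • ∫ τ in (0:ℝ)..1,
            (1 - τ) • mvec (phi 1 (((1 - τ) * h) • M)) (F (x (t₀ + h * τ)))
          = h • ∫ τ in (0:ℝ)..1, h • ((1 - τ) • mvec (phi 1 (((1 - τ) * h) • M))
              (F (x (t₀ + h * τ)))) := by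
            rw [intervalIntegral.integral_smul, smul_smul, ← pow_two]
        _ = h • ∫ τ in (0:ℝ)..1, (fun s => Psi M (h - s) (w s)) (h * τ) := by rw [e1]
        _ = ∫ s in (0:ℝ)..h, Psi M (h - s) (w s) := by
            rw [smul_integral_comp_mul_left (fun s => Psi M (h - s) (w s)) h, mul_zero, mul_one]
    rw [hfinal1, key1 M h (v t₀), e2]
  · exact goal2
end
end

section
/- Let W be any square complex matrix and τ ∈ [0,1]. Then the coefficients γ_τ(W) := φ₀((1−τ)W) and β_τ(W) := (1−τ) φ₁((1−τ)W) satisfy the second symplecticity condition γ_τ(W) (φ₁(−W) − τ φ₁(−τW)) = β_τ(W) (φ₀(−W) + W φ₁(−W) − τ W φ₁(−τW)). -/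
open MeasureTheory intervalIntegral

noncomputable section

attribute [local instance] Matrix.linftyOpNormedAddCommGroup Matrix.linftyOpNormedRing
  Matrix.linftyOpNormedAlgebra

variable {ι : Type} [Fintype ι] [DecidableEq ι]

/-- The matrix φ-functions for complex square matrices: `φ₀(Z) = e^Z`, and
`φ_k(Z) = ∫₀¹ e^{(1-σ)Z} σ^{k-1}/(k-1)! dσ` for `k ≥ 1`. -/
def phiC (k : ℕ) (Z : Matrix ι ι ℂ) : Matrix ι ι ℂ :=
  if k = 0 then NormedSpace.exp Z
  else ∫ σ in (0:ℝ)..1, (σ ^ (k - 1) / (Nat.factorial (k - 1)) : ℝ)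
    • NormedSpace.exp ((1 - σ) • Z)

section helpers
variable (W : Matrix ι ι ℂ)

lemma econt' (g : ℝ → ℝ) (hg : Continuous g) :
    Continuous fun σ : ℝ => NormedSpace.exp (g σ • W) :=
  NormedSpace.exp_continuous.comp (hg.smul continuous_const)

lemma econt : Continuous fun s : ℝ => NormedSpace.exp (s • W) :=
  econt' W _ continuous_id

lemma mulIntL (A : Matrix ι ι ℂ) (f : ℝ → Matrix ι ι ℂ) (l r : ℝ)
    (hf : @IntervalIntegrable _ _ NormedAddCommGroup.toENormedAddCommMonoid.toENormedAddMonoid f volume l r) :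
    A * ∫ s in l..r, f s = ∫ s in l..r, A * f s :=
  ((ContinuousLinearMap.mul ℂ (Matrix ι ι ℂ) A).intervalIntegral_comp_comm hf).symm

lemma mulIntR (A : Matrix ι ι ℂ) (f : ℝ → Matrix ι ι ℂ) (l r : ℝ)
    (hf : @IntervalIntegrable _ _ NormedAddCommGroup.toENormedAddCommMonoid.toENormedAddMonoid f volume l r) :
    (∫ s in l..r, f s) * A = ∫ s in l..r, f s * A :=
  (((ContinuousLinearMap.mul ℂ (Matrix ι ι ℂ)).flip A).intervalIntegral_comp_comm hf).symm

lemma emul (a b : ℝ) : NormedSpace.exp (a • W) * NormedSpace.exp (b • W)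
    = NormedSpace.exp ((a + b) • W) := by
  rw [add_smul]; exact (NormedSpace.exp_add_of_commute (((Commute.refl W).smul_left a).smul_right b)).symm

lemma ederiv (t : ℝ) : HasDerivAt (fun u : ℝ => NormedSpace.exp (u • W))
    (W * NormedSpace.exp (t • W)) t := by
  have := hasDerivAt_exp_smul_const' (𝕂 := ℝ) W t
  exact this

lemma phiC1 (Z : Matrix ι ι ℂ) :
    phiC 1 Z = ∫ σ in (0:ℝ)..1, NormedSpace.exp ((1 - σ) • Z) := by
  simp [phiC]

lemma key (c : ℝ) : c • (W * phiC 1 ((-c) • W)) = 1 - NormedSpace.exp ((-c) • W) := by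
  have h1 : phiC 1 ((-c) • W)
      = ∫ σ in (0:ℝ)..1, NormedSpace.exp (((σ - 1) * c) • W) := by
    rw [phiC1]
    congr 1; ext σ
    rw [smul_smul]; ring_nf
  rw [h1, mulIntL W _ _ _
    ((econt' W (fun σ => (σ - 1) * c) (by continuity)).intervalIntegrable (μ := volume) 0 1),
    ← intervalIntegral.integral_smul]
  have hD : ∀ σ ∈ Set.uIcc (0:ℝ) 1,
      HasDerivAt (fun σ : ℝ => NormedSpace.exp (((σ - 1) * c) • W))
        (c • (W * NormedSpace.exp (((σ - 1) * c) • W))) σ := by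
    intro σ _
    have h := (ederiv W ((σ - 1) * c)).scomp σ (((hasDerivAt_id σ).sub_const 1).mul_const c)
    rw [one_mul] at h
    exact h
  rw [intervalIntegral.integral_eq_sub_of_hasDerivAt hD
    (((continuous_const.mul (econt' W (fun σ => (σ - 1) * c)
      (by continuity))).const_smul c).intervalIntegrable 0 1)]
  norm_num

lemma lemA (c : ℝ) : c • phiC 1 ((-c) • W)
    = ∫ s in (-c)..(0:ℝ), NormedSpace.exp (s • W) := by
  have h1 : phiC 1 ((-c) • W)
      = ∫ σ in (0:ℝ)..1, (fun x : ℝ => NormedSpace.exp ((x * c) • W)) (σ - 1) := by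
    rw [phiC1]; congr 1; ext σ; rw [smul_smul]; ring_nf
  rw [h1, intervalIntegral.integral_comp_sub_right
    (fun x : ℝ => NormedSpace.exp ((x * c) • W)) 1]
  norm_num
  simpa using intervalIntegral.smul_integral_comp_mul_right
    (fun s : ℝ => NormedSpace.exp (s • W)) (a := -1) (b := 0) c

lemma lemB (c : ℝ) : c • phiC 1 (c • W)
    = ∫ s in (0:ℝ)..c, NormedSpace.exp (s • W) := by
  have h1 : phiC 1 (c • W)
      = ∫ σ in (0:ℝ)..1, (fun x : ℝ => NormedSpace.exp ((x * c) • W)) (1 - σ) := by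
    rw [phiC1]; congr 1; ext σ; rw [smul_smul]
  rw [h1, intervalIntegral.integral_comp_sub_left
    (fun x : ℝ => NormedSpace.exp ((x * c) • W)) 1]
  norm_num
  simpa using intervalIntegral.smul_integral_comp_mul_right
    (fun s : ℝ => NormedSpace.exp (s • W)) (a := 0) (b := 1) c

lemma shiftL (a l r : ℝ) : NormedSpace.exp (a • W) * ∫ s in l..r, NormedSpace.exp (s • W)
    = ∫ s in (l + a)..(r + a), NormedSpace.exp (s • W) := by
  rw [mulIntL _ _ _ _ ((econt W).intervalIntegrable (μ := volume) l r),
    ← intervalIntegral.integral_comp_add_right (fun s => NormedSpace.exp (s • W)) a]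
  congr 1; ext s
  rw [emul W a s, add_comm]

lemma shiftR (a l r : ℝ) : (∫ s in l..r, NormedSpace.exp (s • W)) * NormedSpace.exp (a • W)
    = ∫ s in (l + a)..(r + a), NormedSpace.exp (s • W) := by
  rw [mulIntR _ _ _ _ ((econt W).intervalIntegrable (μ := volume) l r),
    ← intervalIntegral.integral_comp_add_right (fun s => NormedSpace.exp (s • W)) a]
  congr 1; ext s
  rw [emul W s a]

end helpers

/-- second symplecticity condition for the coefficients
`γ_τ(W) = φ₀((1-τ)W)`, `β_τ(W) = (1-τ)φ₁((1-τ)W)`: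
`γ_τ(W)(φ₁(-W) - τφ₁(-τW)) = β_τ(W)(φ₀(-W) + Wφ₁(-W) - τWφ₁(-τW))`. -/
theorem stmt4 (W : Matrix ι ι ℂ) (τ : ℝ) (hτ : τ ∈ Set.Icc (0:ℝ) 1) :
    phiC 0 ((1 - τ) • W) * (phiC 1 (-W) - τ • phiC 1 ((-τ) • W))
      = ((1 - τ) • phiC 1 ((1 - τ) • W))
          * (phiC 0 (-W) + W * phiC 1 (-W) - τ • (W * phiC 1 ((-τ) • W))) := by
  have hneg : (-W : Matrix ι ι ℂ) = (-(1:ℝ)) • W := by simp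
  have hk1 : W * phiC 1 (-W) = 1 - NormedSpace.exp ((-(1:ℝ)) • W) := by
    have h := key W 1
    rw [one_smul] at h
    rw [hneg, h]
  have hkτ : τ • (W * phiC 1 ((-τ) • W)) = 1 - NormedSpace.exp ((-τ) • W) := key W τ
  have hbr : phiC 0 (-W) + W * phiC 1 (-W) - τ • (W * phiC 1 ((-τ) • W))
      = NormedSpace.exp ((-τ) • W) := by
    have h0 : phiC 0 (-W) = NormedSpace.exp ((-(1:ℝ)) • W) := by
      rw [hneg]; simp [phiC]
    rw [hk1, hkτ, h0]; abel
  have hA1 : phiC 1 (-W) = ∫ s in (-1:ℝ)..0, NormedSpace.exp (s • W) := by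
    have h := lemA W 1
    rw [one_smul] at h
    rw [hneg, h]
  have hAτ : τ • phiC 1 ((-τ) • W) = ∫ s in (-τ)..(0:ℝ), NormedSpace.exp (s • W) := lemA W τ
  have hsub : phiC 1 (-W) - τ • phiC 1 ((-τ) • W)
      = ∫ s in (-1:ℝ)..(-τ), NormedSpace.exp (s • W) := by
    have hadd := intervalIntegral.integral_add_adjacent_intervals
      ((econt W).intervalIntegrable (μ := volume) (-1) (-τ))
      ((econt W).intervalIntegrable (μ := volume) (-τ) 0)
    rw [hA1, hAτ, ← hadd, add_sub_cancel_right]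
  have h00 : phiC 0 ((1 - τ) • W) = NormedSpace.exp ((1 - τ) • W) := by simp [phiC]
  rw [hbr, hsub, h00, shiftL, lemB, shiftR]
  congr 1 <;> ring
end
end

section
/- Let B ∈ ℝ³, ε ∈ (0,1], M = (1/ε)B̃, and let F: ℝ³ → ℝ³ be continuously differentiable with F and its derivative bounded. Let x solve ẍ = M ẋ + F(x) on an interval containing [t₀, t₀+h] with ‖ẋ(t)‖ ≤ C₀ there. Then there exists a constant C > 0, depending only on B, C₀ and the bounds on F and its derivative (not on ε, h, t₀ or τ), such that for all 0 < h ≤ ε and all τ ∈ [0,1] the stage discrepancy of the second-order method (Algorithm 3.2) satisfies ‖x(t₀+τh) − x(t₀) − τh φ₁(τhM) ẋ(t₀) − h² ∫₀¹ ((τ−σ)/2) φ₁((τ−σ)hM) F(x(t₀+σh)) dσ‖ ≤ C h². -/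
open MeasureTheory intervalIntegral

noncomputable section

attribute [local instance] Matrix.linftyOpNormedAddCommGroup Matrix.linftyOpNormedRing
  Matrix.linftyOpNormedAlgebra

/-- Cross-product (skew-symmetric) matrix `b̃` of a vector `b`, so that `v × b = b̃ v`. -/
def crossMat (b : E3) : Matrix (Fin 3) (Fin 3) ℝ :=
  Matrix.of ![![0, b 2, -(b 1)], ![-(b 2), 0, b 0], ![b 1, -(b 0), 0]]

/-- The continuous-stage equation
`X_τ = xₙ + τh φ₁(τhM) vₙ + h² ∫₀¹ a(τ,σ) φ₁((τ-σ)hM) F(X_σ) dσ` for `τ ∈ [0,1]`. -/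
def stageEq (a : ℝ → ℝ → ℝ) (M : Matrix (Fin 3) (Fin 3) ℝ) (F : E3 → E3) (h : ℝ)
    (xn vn : E3) (X : ℝ → E3) : Prop :=
  ∀ τ ∈ Set.Icc (0:ℝ) 1,
    X τ = xn + (τ * h) • mvec (phi 1 ((τ * h) • M)) vn
      + h ^ 2 • ∫ σ in (0:ℝ)..1, a τ σ • mvec (phi 1 (((τ - σ) * h) • M)) (F (X σ))

/-- The update equations
`xₙ₊₁ = xₙ + h φ₁(hM) vₙ + h² ∫₀¹ (1-τ) φ₁((1-τ)hM) F(X_τ) dτ` and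
`vₙ₊₁ = φ₀(hM) vₙ + h ∫₀¹ φ₀((1-τ)hM) F(X_τ) dτ`. -/
def updEq (M : Matrix (Fin 3) (Fin 3) ℝ) (F : E3 → E3) (h : ℝ)
    (xn vn xn1 vn1 : E3) (X : ℝ → E3) : Prop :=
  xn1 = xn + h • mvec (phi 1 (h • M)) vn
      + h ^ 2 • ∫ τ in (0:ℝ)..1, (1 - τ) • mvec (phi 1 (((1 - τ) * h) • M)) (F (X τ))
  ∧ vn1 = mvec (phi 0 (h • M)) vn
      + h • ∫ τ in (0:ℝ)..1, mvec (phi 0 (((1 - τ) * h) • M)) (F (X τ))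

namespace Stmt19Aux

open NormedSpace

abbrev Mat := Matrix (Fin 3) (Fin 3) ℝ

instance instNACGPhi : NormedAddCommGroup (Mat →L[ℝ] (E3 →L[ℝ] E3)) :=
  ContinuousLinearMap.toNormedAddCommGroup

instance instNSPhi : NormedSpace ℝ (Mat →L[ℝ] (E3 →L[ℝ] E3)) :=
  ContinuousLinearMap.toNormedSpace

/-- The action of matrices on `E3` as a continuous linear map into continuous linear maps. -/
def Phi : Mat →L[ℝ] (E3 →L[ℝ] E3) :=
  LinearMap.toContinuousLinearMap
    ((LinearMap.toContinuousLinearMap :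
        (E3 →ₗ[ℝ] E3) ≃ₗ[ℝ] (E3 →L[ℝ] E3)).toLinearMap.comp
      (Matrix.toEuclideanLin : Mat ≃ₗ[ℝ] (E3 →ₗ[ℝ] E3)).toLinearMap)

lemma mvec_eq (A : Mat) (v : E3) : mvec A v = Phi A v := rfl

lemma mvec_norm (A : Mat) (v : E3) : ‖mvec A v‖ ≤ ‖Phi‖ * ‖A‖ * ‖v‖ := by
  rw [mvec_eq]
  calc ‖Phi A v‖ ≤ ‖Phi A‖ * ‖v‖ := (Phi A).le_opNorm v
    _ ≤ ‖Phi‖ * ‖A‖ * ‖v‖ := by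
        gcongr; exact Phi.le_opNorm A

lemma Phi_mul (A B : Mat) (v : E3) : Phi (A * B) v = Phi A (Phi B v) := by
  simp only [← mvec_eq]
  simp [mvec, Matrix.toEuclideanLin_apply, Matrix.mulVec_mulVec]

lemma mvec_one (v : E3) : mvec 1 v = v := by
  simp [mvec, Matrix.toEuclideanLin_apply]

lemma norm_exp_le (Z : Mat) : ‖exp Z‖ ≤ Real.exp ‖Z‖ := by
  rw [NormedSpace.exp_eq_tsum (𝕂 := ℝ)]
  refine le_trans (norm_tsum_le_tsum_norm (norm_expSeries_summable' Z)) ?_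
  rw [Real.exp_eq_exp_ℝ, NormedSpace.exp_eq_tsum (𝕂 := ℝ)]
  refine Summable.tsum_le_tsum ?_ (norm_expSeries_summable' Z) ?_
  · intro n
    rw [norm_smul]
    rcases Nat.eq_zero_or_pos n with h | h
    · simp [h]
    · calc ‖(n.factorial : ℝ)⁻¹‖ * ‖Z ^ n‖ ≤ ‖(n.factorial : ℝ)⁻¹‖ * ‖Z‖ ^ n := by
            gcongr; exact norm_pow_le' Z h
        _ = ‖((n.factorial : ℝ))⁻¹ • ‖Z‖ ^ n‖ := by
            rw [norm_smul]; simp [abs_of_nonneg, pow_nonneg]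
        _ ≤ (n.factorial : ℝ)⁻¹ • ‖Z‖ ^ n := by
            rw [Real.norm_eq_abs, abs_of_nonneg]
            positivity
  · have := norm_expSeries_summable' (𝕂 := ℝ) (‖Z‖ : ℝ)
    refine this.of_nonneg_of_le (fun n => by positivity) (fun n => ?_)
    rw [Real.norm_eq_abs, abs_of_nonneg (by positivity)]

lemma phi_one_eq (Z : Mat) : phi 1 Z = ∫ σ in (0:ℝ)..1, exp ((1 - σ) • Z) := by
  simp [phi]

lemma norm_phi_one_le (Z : Mat) : ‖phi 1 Z‖ ≤ Real.exp ‖Z‖ := by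
  rw [phi_one_eq]
  have := intervalIntegral.norm_integral_le_of_norm_le_const
    (C := Real.exp ‖Z‖) (a := (0:ℝ)) (b := 1)
    (f := fun σ => exp ((1 - σ) • Z)) ?_
  · simpa using this
  · intro σ hσ
    rw [Set.uIoc_of_le (by norm_num)] at hσ
    refine le_trans (norm_exp_le _) (Real.exp_le_exp.mpr ?_)
    rw [norm_smul, Real.norm_eq_abs]
    have habs : |1 - σ| ≤ 1 := by
      rw [abs_le]; exact ⟨by linarith [hσ.2], by linarith [hσ.1]⟩
    nlinarith [norm_nonneg Z, abs_nonneg (1 - σ)]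

lemma smul_phi_one (Mt : Mat) (u : ℝ) (hu : u ≠ 0) :
    u • phi 1 (u • Mt) = ∫ s in (0:ℝ)..u, exp (s • Mt) := by
  have h1 : phi 1 (u • Mt) = ∫ σ in (0:ℝ)..1, exp (((1 - σ) * u) • Mt) := by
    rw [phi_one_eq]
    congr 1; ext σ; rw [smul_smul]
  have h2 : (∫ σ in (0:ℝ)..1, exp (((1 - σ) * u) • Mt))
      = ∫ σ in (0:ℝ)..1, exp ((σ * u) • Mt) := by
    have := intervalIntegral.integral_comp_sub_left
      (a := (0:ℝ)) (b := 1) (fun σ => exp ((σ * u) • Mt)) 1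
    simpa using this
  have h3 : (∫ σ in (0:ℝ)..1, exp ((σ * u) • Mt))
      = u⁻¹ • ∫ s in (0:ℝ)..u, exp (s • Mt) := by
    have := intervalIntegral.integral_comp_mul_right
      (a := (0:ℝ)) (b := 1) (fun s => exp (s • Mt)) hu
    simpa using this
  rw [h1, h2, h3, smul_smul, mul_inv_cancel₀ hu, one_smul]

end Stmt19Aux

open Stmt19Aux NormedSpace

set_option maxHeartbeats 1600000 in
/-- stage discrepancy of the second-order method, Algorithm 3.2. -/
theorem stmt19 (B : E3) (C₀ CF : ℝ) :
    ∃ C : ℝ, 0 < C ∧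
      ∀ F : E3 → E3, ContDiff ℝ 1 F →
        (∀ y, ‖F y‖ ≤ CF ∧ ‖iteratedFDeriv ℝ 1 F y‖ ≤ CF) →
      ∀ ε : ℝ, 0 < ε → ε ≤ 1 →
      ∀ t₀ h : ℝ, 0 < h → h ≤ ε →
      ∀ x : ℝ → E3, ContDiff ℝ 2 x →
        (∀ t ∈ Set.Icc t₀ (t₀ + h),
          deriv (deriv x) t = mvec ((1 / ε) • crossMat B) (deriv x t) + F (x t)) →
        (∀ t ∈ Set.Icc t₀ (t₀ + h), ‖deriv x t‖ ≤ C₀) →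
      ∀ τ ∈ Set.Icc (0:ℝ) 1,
        ‖x (t₀ + τ * h) - x t₀
            - (τ * h) • mvec (phi 1 ((τ * h) • ((1 / ε) • crossMat B))) (deriv x t₀)
            - h ^ 2 • ∫ σ in (0:ℝ)..1,
                ((τ - σ) / 2) • mvec (phi 1 (((τ - σ) * h) • ((1 / ε) • crossMat B)))
                  (F (x (t₀ + σ * h)))‖
          ≤ C * h ^ 2 := by
  set K : ℝ := ‖crossMat B‖ with hKdef
  set EK : ℝ := Real.exp K with hEKdef
  refine ⟨2 * (‖Phi‖ + 1) ^ 2 * EK ^ 2 * (|CF| + 1), by positivity, ?_⟩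
  intro F hFc hF ε hε hε1 t₀ h hh hhε x hx hODE hC0 τ hτ
  set M : Mat := (1 / ε) • crossMat B with hMdef
  have hCF : 0 ≤ CF := le_trans (norm_nonneg _) (hF 0).1
  have hKnn : 0 ≤ K := norm_nonneg _
  have hEK1 : (1:ℝ) ≤ EK := Real.one_le_exp hKnn
  have hMn : ‖M‖ = (1 / ε) * K := by
    rw [hMdef, norm_smul, Real.norm_eq_abs, abs_of_pos (by positivity)]
  -- smallness of `s • M` for `|s| ≤ h`
  have hsM : ∀ s : ℝ, |s| ≤ h → ‖s • M‖ ≤ K := by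
    intro s hs
    rw [norm_smul, Real.norm_eq_abs, hMn]
    calc |s| * (1 / ε * K) ≤ h * (1 / ε * K) := by
          gcongr
      _ = (h / ε) * K := by ring
      _ ≤ 1 * K := by
          gcongr
          rw [div_le_one hε]; exact hhε
      _ = K := one_mul K
  have heb : ∀ s : ℝ, |s| ≤ h → ‖exp (s • M)‖ ≤ EK :=
    fun s hs => le_trans (norm_exp_le _) (Real.exp_le_exp.mpr (hsM s hs))
  -- differentiability facts
  have hx' : ContDiff ℝ (1 + 1) x := by norm_num; exact hx
  have hxd : Differentiable ℝ x := (contDiff_succ_iff_deriv.mp hx').1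
  have hvc : ContDiff ℝ 1 (deriv x) := (contDiff_succ_iff_deriv.mp hx').2.2
  have hvd : Differentiable ℝ (deriv x) := (contDiff_one_iff_deriv.mp hvc).1
  have hvcont : Continuous (deriv x) := hvd.continuous
  have hdvcont : Continuous (deriv (deriv x)) := (contDiff_one_iff_deriv.mp hvc).2
  -- the exponential curve
  set e : ℝ → Mat := fun s => exp (s • M) with hedef
  have hecont : Continuous e := exp_continuous.comp (continuous_id.smul continuous_const)
  have hcompd : ∀ s : ℝ, HasDerivAt (fun s : ℝ => deriv x (t₀ + s))
      (deriv (deriv x) (t₀ + s)) s := by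
    intro s
    have hv : HasDerivAt (deriv x) (deriv (deriv x) (t₀ + s)) (t₀ + s) := (hvd _).hasDerivAt
    have := hv.scomp s ((hasDerivAt_id s).const_add t₀)
    simpa [Function.comp_def] using this
  -- the auxiliary function g and its derivative
  set g : ℝ → E3 := fun s => Phi (e (-s)) (deriv x (t₀ + s)) with hgdef
  set g' : ℝ → E3 := fun s =>
    Phi (-(e (-s) * M)) (deriv x (t₀ + s)) + Phi (e (-s)) (deriv (deriv x) (t₀ + s)) with hg'def
  have hg : ∀ s : ℝ, HasDerivAt g (g' s) s := by
    intro s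
    have h1 : HasDerivAt (fun u : ℝ => exp (u • M)) (e (-s) * M) (-s) :=
      hasDerivAt_exp_smul_const M (-s)
    have h2 : HasDerivAt (fun s : ℝ => -s) (-1 : ℝ) s := (hasDerivAt_id s).neg
    have h3 : HasDerivAt (fun s : ℝ => e (-s)) (-(e (-s) * M)) s := by
      have := h1.scomp s h2
      simp only [Function.comp_def, neg_one_smul] at this
      exact this
    have h4 : HasDerivAt (fun s : ℝ => Phi (e (-s))) (Phi (-(e (-s) * M))) s :=
      Phi.hasFDerivAt.comp_hasDerivAt s h3
    exact h4.clm_apply (hcompd s)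
  have hce : Continuous fun s : ℝ => e (-s) := hecont.comp continuous_neg
  have hg'cont : Continuous g' := by
    refine Continuous.add ?_ ?_
    · exact (Phi.continuous.comp ((hce.mul continuous_const).neg)).clm_apply
        (hvcont.comp (continuous_const.add continuous_id))
    · exact (Phi.continuous.comp hce).clm_apply
        (hdvcont.comp (continuous_const.add continuous_id))
  -- norm bound on g'
  have hg'bound : ∀ σ ∈ Set.Icc (0:ℝ) h, ‖g' σ‖ ≤ ‖Phi‖ * EK * CF := by
    intro σ hσ
    have ht : t₀ + σ ∈ Set.Icc t₀ (t₀ + h) := ⟨by linarith [hσ.1], by linarith [hσ.2]⟩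
    have hODEσ := hODE _ ht
    have hval : g' σ = Phi (e (-σ)) (F (x (t₀ + σ))) := by
      simp only [hg'def, hODEσ, mvec_eq]
      rw [map_neg, ContinuousLinearMap.neg_apply, map_add, ← Phi_mul]
      abel
    rw [hval, ← mvec_eq]
    calc ‖mvec (e (-σ)) (F (x (t₀ + σ)))‖ ≤ ‖Phi‖ * ‖e (-σ)‖ * ‖F (x (t₀ + σ))‖ :=
          mvec_norm _ _
      _ ≤ ‖Phi‖ * EK * CF := by
          gcongr
          · exact heb _ (by rw [abs_neg, abs_of_nonneg hσ.1]; exact hσ.2)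
          · exact (hF _).1
  -- integral bound on g
  have hgsub : ∀ s ∈ Set.Icc (0:ℝ) h, ‖g s - g 0‖ ≤ ‖Phi‖ * EK * CF * s := by
    intro s hs
    have hftc : (∫ σ in (0:ℝ)..s, g' σ) = g s - g 0 :=
      intervalIntegral.integral_eq_sub_of_hasDerivAt (fun σ _ => hg σ)
        (hg'cont.intervalIntegrable _ _)
    rw [← hftc]
    have hb := intervalIntegral.norm_integral_le_of_norm_le_const
      (C := ‖Phi‖ * EK * CF) (a := (0:ℝ)) (b := s) (f := g') ?_
    · calc ‖∫ σ in (0:ℝ)..s, g' σ‖ ≤ ‖Phi‖ * EK * CF * |s - 0| := hb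
        _ = ‖Phi‖ * EK * CF * s := by rw [sub_zero, abs_of_nonneg hs.1]
    · intro σ hσ
      rw [Set.uIoc_of_le hs.1] at hσ
      exact hg'bound σ ⟨le_of_lt hσ.1, hσ.2.trans hs.2⟩
  -- pointwise bound for the velocity deviation
  have hD : ∀ s ∈ Set.Icc (0:ℝ) h,
      ‖deriv x (t₀ + s) - mvec (e s) (deriv x t₀)‖ ≤ ‖Phi‖ ^ 2 * EK ^ 2 * CF * s := by
    intro s hs
    have hinv : e s * e (-s) = 1 := by
      simp only [hedef]
      erw [← NormedSpace.exp_add_of_commute (((Commute.refl M).smul_left s).smul_right (-s))]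
      rw [← add_smul]
      simp
    have hg0 : g 0 = deriv x t₀ := by
      simp only [hgdef, hedef, neg_zero, zero_smul, exp_zero, add_zero, ← mvec_eq, mvec_one]
    have hkey : deriv x (t₀ + s) = Phi (e s) (g s) := by
      simp only [hgdef]
      rw [← Phi_mul, hinv, ← mvec_eq, mvec_one]
    have hdiff : deriv x (t₀ + s) - mvec (e s) (deriv x t₀) = Phi (e s) (g s - g 0) := by
      rw [map_sub, hkey, hg0, mvec_eq]
    rw [hdiff, ← mvec_eq]
    calc ‖mvec (e s) (g s - g 0)‖ ≤ ‖Phi‖ * ‖e s‖ * ‖g s - g 0‖ := mvec_norm _ _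
      _ ≤ ‖Phi‖ * EK * (‖Phi‖ * EK * CF * s) := by
          gcongr
          · exact heb s (by rw [abs_of_nonneg hs.1]; exact hs.2)
          · exact hgsub s hs
      _ = ‖Phi‖ ^ 2 * EK ^ 2 * CF * s := by ring
  -- Term A bound
  have termA : ∀ u ∈ Set.Icc (0:ℝ) h,
      ‖x (t₀ + u) - x t₀ - u • mvec (phi 1 (u • M)) (deriv x t₀)‖
        ≤ ‖Phi‖ ^ 2 * EK ^ 2 * CF * h ^ 2 := by
    intro u hu
    rcases eq_or_lt_of_le hu.1 with hu0 | hupos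
    · rw [← hu0]
      simp only [add_zero, zero_smul, sub_zero, sub_self, norm_zero]
      positivity
    · have hne : u ≠ 0 := ne_of_gt hupos
      have hcont1 : Continuous fun s : ℝ => deriv x (t₀ + s) :=
        hvcont.comp (continuous_const.add continuous_id)
      have hI1 : IntervalIntegrable (fun s : ℝ => deriv x (t₀ + s)) volume 0 u :=
        hcont1.intervalIntegrable _ _
      have hxftc : x (t₀ + u) - x t₀ = ∫ s in (0:ℝ)..u, deriv x (t₀ + s) := by
        have := intervalIntegral.integral_eq_sub_of_hasDerivAt
          (f := fun s : ℝ => x (t₀ + s)) (f' := fun s : ℝ => deriv x (t₀ + s))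
          (a := (0:ℝ)) (b := u) ?_ ?_
        · rw [this, add_zero]
        · intro s _
          have hv : HasDerivAt x (deriv x (t₀ + s)) (t₀ + s) := (hxd _).hasDerivAt
          have := hv.scomp s ((hasDerivAt_id s).const_add t₀)
          simpa [Function.comp_def] using this
        · exact hI1
      have hI2 : IntervalIntegrable (fun s : ℝ => mvec (e s) (deriv x t₀)) volume 0 u := by
        have : Continuous fun s : ℝ => mvec (e s) (deriv x t₀) := by
          simp only [mvec_eq]
          exact (Phi.continuous.comp hecont).clm_apply continuous_const
        exact this.intervalIntegrable _ _
      have hsmul : u • mvec (phi 1 (u • M)) (deriv x t₀)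
          = ∫ s in (0:ℝ)..u, mvec (e s) (deriv x t₀) := by
        have h1 : u • phi 1 (u • M) = ∫ s in (0:ℝ)..u, e s := smul_phi_one M u hne
        have h2 : (∫ s in (0:ℝ)..u, Phi.flip (deriv x t₀) (e s))
            = Phi.flip (deriv x t₀) (∫ s in (0:ℝ)..u, e s) :=
          (Phi.flip (deriv x t₀)).intervalIntegral_comp_comm
            (hecont.intervalIntegrable _ _)
        calc u • mvec (phi 1 (u • M)) (deriv x t₀)
            = Phi (u • phi 1 (u • M)) (deriv x t₀) := by
              rw [mvec_eq, _root_.map_smul Phi u (phi 1 (u • M)),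
                ContinuousLinearMap.smul_apply]
          _ = Phi.flip (deriv x t₀) (∫ s in (0:ℝ)..u, e s) := by
              rw [h1]; rfl
          _ = ∫ s in (0:ℝ)..u, Phi.flip (deriv x t₀) (e s) := h2.symm
          _ = ∫ s in (0:ℝ)..u, mvec (e s) (deriv x t₀) := rfl
      rw [hxftc, hsmul, ← intervalIntegral.integral_sub hI1 hI2]
      have hb := intervalIntegral.norm_integral_le_of_norm_le_const
        (C := ‖Phi‖ ^ 2 * EK ^ 2 * CF * h) (a := (0:ℝ)) (b := u)
        (f := fun s => deriv x (t₀ + s) - mvec (e s) (deriv x t₀)) ?_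
      · calc ‖∫ s in (0:ℝ)..u, (deriv x (t₀ + s) - mvec (e s) (deriv x t₀))‖
            ≤ ‖Phi‖ ^ 2 * EK ^ 2 * CF * h * |u - 0| := hb
          _ = ‖Phi‖ ^ 2 * EK ^ 2 * CF * h * u := by rw [sub_zero, abs_of_nonneg hu.1]
          _ ≤ ‖Phi‖ ^ 2 * EK ^ 2 * CF * h * h := by gcongr; exact hu.2
          _ = ‖Phi‖ ^ 2 * EK ^ 2 * CF * h ^ 2 := by ring
      · intro s hs
        rw [Set.uIoc_of_le (le_of_lt hupos)] at hs
        calc ‖deriv x (t₀ + s) - mvec (e s) (deriv x t₀)‖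
            ≤ ‖Phi‖ ^ 2 * EK ^ 2 * CF * s :=
              hD s ⟨le_of_lt hs.1, hs.2.trans hu.2⟩
          _ ≤ ‖Phi‖ ^ 2 * EK ^ 2 * CF * h := by gcongr; exact hs.2.trans hu.2
  -- Term B bound
  have termB : ‖∫ σ in (0:ℝ)..1,
      ((τ - σ) / 2) • mvec (phi 1 (((τ - σ) * h) • M)) (F (x (t₀ + σ * h)))‖
        ≤ (1 / 2) * ‖Phi‖ * EK * CF := by
    have hb := intervalIntegral.norm_integral_le_of_norm_le_const
      (C := (1 / 2) * ‖Phi‖ * EK * CF) (a := (0:ℝ)) (b := 1)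
      (f := fun σ => ((τ - σ) / 2) • mvec (phi 1 (((τ - σ) * h) • M)) (F (x (t₀ + σ * h)))) ?_
    · simpa using hb
    · intro σ hσ
      rw [Set.uIoc_of_le (by norm_num)] at hσ
      have habs : |τ - σ| ≤ 1 := by
        rw [abs_le]
        constructor
        · linarith [hτ.1, hσ.2]
        · linarith [hτ.2, hσ.1]
      have hphib : ‖phi 1 (((τ - σ) * h) • M)‖ ≤ EK := by
        refine le_trans (norm_phi_one_le _) (Real.exp_le_exp.mpr ?_)
        refine hsM _ ?_
        rw [abs_mul, abs_of_pos hh]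
        calc |τ - σ| * h ≤ 1 * h := by gcongr
          _ = h := one_mul h
      rw [norm_smul, Real.norm_eq_abs]
      calc |(τ - σ) / 2| * ‖mvec (phi 1 (((τ - σ) * h) • M)) (F (x (t₀ + σ * h)))‖
          ≤ (1 / 2) * (‖Phi‖ * ‖phi 1 (((τ - σ) * h) • M)‖ * ‖F (x (t₀ + σ * h))‖) := by
            refine mul_le_mul ?_ (mvec_norm _ _) (norm_nonneg _) (by norm_num)
            rw [abs_div]
            rw [abs_of_pos (by norm_num : (0:ℝ) < 2)]
            linarith
        _ ≤ (1 / 2) * (‖Phi‖ * EK * CF) := by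
            gcongr
            exact (hF _).1
        _ = (1 / 2) * ‖Phi‖ * EK * CF := by ring
  -- assemble
  have huIcc : τ * h ∈ Set.Icc (0:ℝ) h := by
    constructor
    · exact mul_nonneg hτ.1 (le_of_lt hh)
    · calc τ * h ≤ 1 * h := by gcongr; exact hτ.2
        _ = h := one_mul h
  have hA := termA (τ * h) huIcc
  calc ‖x (t₀ + τ * h) - x t₀
        - (τ * h) • mvec (phi 1 ((τ * h) • M)) (deriv x t₀)
        - h ^ 2 • ∫ σ in (0:ℝ)..1,
            ((τ - σ) / 2) • mvec (phi 1 (((τ - σ) * h) • M)) (F (x (t₀ + σ * h)))‖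
      ≤ ‖x (t₀ + τ * h) - x t₀ - (τ * h) • mvec (phi 1 ((τ * h) • M)) (deriv x t₀)‖
        + ‖h ^ 2 • ∫ σ in (0:ℝ)..1,
            ((τ - σ) / 2) • mvec (phi 1 (((τ - σ) * h) • M)) (F (x (t₀ + σ * h)))‖ :=
        norm_sub_le _ _
    _ ≤ ‖Phi‖ ^ 2 * EK ^ 2 * CF * h ^ 2 + h ^ 2 * ((1 / 2) * ‖Phi‖ * EK * CF) := by
        refine add_le_add hA ?_
        rw [norm_smul, Real.norm_eq_abs, abs_of_nonneg (by positivity : (0:ℝ) ≤ h ^ 2)]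
        gcongr
    _ ≤ 2 * (‖Phi‖ + 1) ^ 2 * EK ^ 2 * (|CF| + 1) * h ^ 2 := by
        have hP : (0:ℝ) ≤ ‖Phi‖ := ContinuousLinearMap.opNorm_nonneg Phi
        have hCFabs : CF ≤ |CF| + 1 := by
          have := le_abs_self CF; linarith
        have hh2 : (0:ℝ) ≤ h ^ 2 := by positivity
        have h1 : ‖Phi‖ ^ 2 * EK ^ 2 * CF ≤ (‖Phi‖ + 1) ^ 2 * EK ^ 2 * (|CF| + 1) := by
          gcongr ?_ * ?_ * ?_ <;> nlinarith
        have h2 : (1 / 2) * ‖Phi‖ * EK * CF ≤ (‖Phi‖ + 1) ^ 2 * EK ^ 2 * (|CF| + 1) := by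
          have e0 : (0:ℝ) < EK := lt_of_lt_of_le one_pos hEK1
          have e1 : (1 / 2) * ‖Phi‖ * EK ≤ (‖Phi‖ + 1) ^ 2 * EK ^ 2 := by
            nlinarith [sq_nonneg ‖Phi‖, mul_nonneg hP (le_of_lt e0),
              mul_le_mul_of_nonneg_left hEK1
                (by positivity : (0:ℝ) ≤ (‖Phi‖ + 1) ^ 2 * EK)]
          calc (1 / 2) * ‖Phi‖ * EK * CF ≤ (‖Phi‖ + 1) ^ 2 * EK ^ 2 * CF :=
                mul_le_mul_of_nonneg_right e1 hCF
            _ ≤ (‖Phi‖ + 1) ^ 2 * EK ^ 2 * (|CF| + 1) := by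
                gcongr
        nlinarith
end
end
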